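/- Let v₁, v₂, v₃ ∈ ℝ³ be the vertices of an equilateral triangle, and let v₄ ∈ ℝ³ be a point not in the affine span of v₁, v₂, v₃ that is equidistant from v₁, v₂, v₃. Set ε = ∠(v₁, v₄, v₂). Then ∠(v₁, v₄, v₂) = ∠(v₂, v₄, v₃) = ∠(v₃, v₄, v₁) = ε, the angle deficit at v₄ equals 2π − 3ε, and the angle deficit at each base vertex vᵢ (i = 1, 2, 3) equals 2π/3 + ε. Consequently, if 0 < ε < π/3 then v₄ is the unique vertex of the tetrahedron with angle deficit ≥ π; in particular there exist four affinely independent points in ℝ³ such that exactly one of them has angle deficit ≥ π. -/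

import Mathlib

open EuclideanGeometry Real

lemma angle_congr' {a b c a' b' c' : EuclideanSpace ℝ (Fin 3)} (hba : b ≠ a) (hbc : b ≠ c)
    (h1 : dist b a = dist b' a') (h2 : dist b c = dist b' c') (h3 : dist a c = dist a' c') :
    ∠ a b c = ∠ a' b' c' := by
  have l1 := EuclideanGeometry.law_cos a b c
  have l2 := EuclideanGeometry.law_cos a' b' c'
  have hab : dist a b = dist a' b' := by rw [dist_comm a b, dist_comm a' b']; exact h1
  have hcb : dist c b = dist c' b' := by rw [dist_comm c b, dist_comm c' b']; exact h2
  have hpos : (0:ℝ) < 2 * dist a' b' * dist c' b' := by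
    rw [← hab, ← hcb]
    have h1' : 0 < dist a b := by rw [dist_comm]; exact dist_pos.2 hba
    have h2' : 0 < dist c b := by rw [dist_comm]; exact dist_pos.2 hbc
    positivity
  have hcos : Real.cos (∠ a b c) = Real.cos (∠ a' b' c') := by
    rw [hab, hcb, h3] at l1
    exact mul_left_cancel₀ hpos.ne' (by linarith)
  exact Real.injOn_cos ⟨EuclideanGeometry.angle_nonneg _ _ _, EuclideanGeometry.angle_le_pi _ _ _⟩
    ⟨EuclideanGeometry.angle_nonneg _ _ _, EuclideanGeometry.angle_le_pi _ _ _⟩ hcos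

lemma iso_base' {x y apex : EuclideanSpace ℝ (Fin 3)} (hyx : y ≠ x) (hax : apex ≠ x)
    (h : dist apex x = dist apex y) : ∠ apex x y = (π - ∠ x apex y) / 2 := by
  have hsum := EuclideanGeometry.angle_add_angle_add_angle_eq_pi apex hyx
  have hiso : ∠ apex x y = ∠ apex y x := EuclideanGeometry.angle_eq_angle_of_dist_eq h
  rw [EuclideanGeometry.angle_comm x y apex, EuclideanGeometry.angle_comm y apex x] at hsum
  linarith [hsum, hiso]

lemma spike_aux (v₁ v₂ v₃ v₄ : EuclideanSpace ℝ (Fin 3)) (s : ℝ) (hs : 0 < s)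
    (h12 : dist v₁ v₂ = s) (h23 : dist v₂ v₃ = s) (h31 : dist v₃ v₁ = s)
    (hv₄ : v₄ ∉ affineSpan ℝ ({v₁, v₂, v₃} : Set (EuclideanSpace ℝ (Fin 3))))
    (heq : dist v₄ v₁ = dist v₄ v₂ ∧ dist v₄ v₂ = dist v₄ v₃) :
    ∠ v₂ v₄ v₃ = ∠ v₁ v₄ v₂ ∧ ∠ v₃ v₄ v₁ = ∠ v₁ v₄ v₂ ∧
    ∠ v₂ v₁ v₃ + ∠ v₂ v₁ v₄ + ∠ v₃ v₁ v₄ = 4 * π / 3 - ∠ v₁ v₄ v₂ ∧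
    ∠ v₁ v₂ v₃ + ∠ v₁ v₂ v₄ + ∠ v₃ v₂ v₄ = 4 * π / 3 - ∠ v₁ v₄ v₂ ∧
    ∠ v₁ v₃ v₂ + ∠ v₁ v₃ v₄ + ∠ v₂ v₃ v₄ = 4 * π / 3 - ∠ v₁ v₄ v₂ := by
  obtain ⟨hq1, hq2⟩ := heq
  -- distances
  have d12 : dist v₁ v₂ = s := h12
  have d21 : dist v₂ v₁ = s := by rw [dist_comm]; exact h12
  have d23 : dist v₂ v₃ = s := h23
  have d32 : dist v₃ v₂ = s := by rw [dist_comm]; exact h23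
  have d31 : dist v₃ v₁ = s := h31
  have d13 : dist v₁ v₃ = s := by rw [dist_comm]; exact h31
  -- distinctness
  have n21 : v₂ ≠ v₁ := by intro h; rw [h] at d21; simp at d21; linarith
  have n12 : v₁ ≠ v₂ := n21.symm
  have n31 : v₃ ≠ v₁ := by intro h; rw [h] at d31; simp at d31; linarith
  have n13 : v₁ ≠ v₃ := n31.symm
  have n32 : v₃ ≠ v₂ := by intro h; rw [h] at d32; simp at d32; linarith
  have n23 : v₂ ≠ v₃ := n32.symm
  have n41 : v₄ ≠ v₁ := by
    intro h; exact hv₄ (h ▸ mem_affineSpan ℝ (by simp))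
  have n42 : v₄ ≠ v₂ := by
    intro h; exact hv₄ (h ▸ mem_affineSpan ℝ (by simp))
  have n43 : v₄ ≠ v₃ := by
    intro h; exact hv₄ (h ▸ mem_affineSpan ℝ (by simp))
  have hq31 : dist v₄ v₃ = dist v₄ v₁ := by rw [← hq2, ← hq1]
  -- apex angles equal
  have E1 : ∠ v₂ v₄ v₃ = ∠ v₁ v₄ v₂ :=
    angle_congr' n42 n43 hq1.symm hq2.symm (by rw [d23, d12])
  have E2 : ∠ v₃ v₄ v₁ = ∠ v₁ v₄ v₂ :=
    angle_congr' n43 n41 hq31 hq1 (by rw [d31, d12])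
  -- equilateral base angle = π/3
  have hsum := EuclideanGeometry.angle_add_angle_add_angle_eq_pi v₃ n21
  have e1 : ∠ v₁ v₂ v₃ = ∠ v₂ v₁ v₃ :=
    angle_congr' n21 n23 (by rw [d21, d12]) (by rw [d23, d13]) (by rw [d13, d23])
  have e2 : ∠ v₂ v₃ v₁ = ∠ v₂ v₁ v₃ :=
    angle_congr' n32 n31 (by rw [d32, d12]) (by rw [d31, d13]) (by rw [d21, d23])
  have e3 : ∠ v₃ v₁ v₂ = ∠ v₂ v₁ v₃ := EuclideanGeometry.angle_comm _ _ _
  have hA : ∠ v₂ v₁ v₃ = π / 3 := by linarith [hsum, e1, e2, e3]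
  -- base angles of the isosceles faces
  have B12 : ∠ v₄ v₁ v₂ = (π - ∠ v₁ v₄ v₂) / 2 := iso_base' n21 n41 hq1
  have B13 : ∠ v₄ v₁ v₃ = (π - ∠ v₁ v₄ v₂) / 2 := by
    have := iso_base' n31 n41 (hq1.trans hq2)
    rwa [EuclideanGeometry.angle_comm v₁ v₄ v₃, E2] at this
  have B21 : ∠ v₄ v₂ v₁ = (π - ∠ v₁ v₄ v₂) / 2 := by
    have := iso_base' n12 n42 (by rw [← hq1])
    rwa [EuclideanGeometry.angle_comm v₂ v₄ v₁] at this
  have B23 : ∠ v₄ v₂ v₃ = (π - ∠ v₁ v₄ v₂) / 2 := by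
    have := iso_base' n32 n42 hq2
    rwa [E1] at this
  have B31 : ∠ v₄ v₃ v₁ = (π - ∠ v₁ v₄ v₂) / 2 := by
    have := iso_base' n13 n43 (by rw [← hq2, ← hq1])
    rwa [E2] at this
  have B32 : ∠ v₄ v₃ v₂ = (π - ∠ v₁ v₄ v₂) / 2 := by
    have := iso_base' n23 n43 (by rw [← hq2])
    rwa [EuclideanGeometry.angle_comm v₃ v₄ v₂, E1] at this
  refine ⟨E1, E2, ?_, ?_, ?_⟩
  · rw [EuclideanGeometry.angle_comm v₂ v₁ v₄, EuclideanGeometry.angle_comm v₃ v₁ v₄,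
      B12, B13, hA]; ring
  · have e1' : ∠ v₁ v₂ v₃ = π / 3 := e1.trans hA
    rw [EuclideanGeometry.angle_comm v₁ v₂ v₄, EuclideanGeometry.angle_comm v₃ v₂ v₄,
      B21, B23, e1']; ring
  · have e2' : ∠ v₁ v₃ v₂ = π / 3 := (EuclideanGeometry.angle_comm v₁ v₃ v₂ ▸ e2).trans hA
    rw [EuclideanGeometry.angle_comm v₁ v₃ v₄, EuclideanGeometry.angle_comm v₂ v₃ v₄,
      B31, B32, e2']; ring

noncomputable def spt (a b c : ℝ) : EuclideanSpace ℝ (Fin 3) :=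
  (WithLp.equiv 2 (Fin 3 → ℝ)).symm ![a, b, c]

lemma spt_apply (a b c : ℝ) (i : Fin 3) : spt a b c i = ![a, b, c] i := rfl

lemma dist_spt (a b c a' b' c' : ℝ) :
    dist (spt a b c) (spt a' b' c') = Real.sqrt ((a-a')^2+(b-b')^2+(c-c')^2) := by
  rw [EuclideanSpace.dist_eq, Fin.sum_univ_three]
  simp only [spt_apply, Matrix.cons_val_zero, Matrix.cons_val_one, Matrix.head_cons,
    Matrix.cons_val_two, Matrix.tail_cons, Real.dist_eq, sq_abs]

noncomputable def sP0 : EuclideanSpace ℝ (Fin 3) := spt 0 0 0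
noncomputable def sP1 : EuclideanSpace ℝ (Fin 3) := spt 1 0 0
noncomputable def sP2 : EuclideanSpace ℝ (Fin 3) := spt (1/2) (Real.sqrt 3 / 2) 0
noncomputable def sP3 : EuclideanSpace ℝ (Fin 3) := spt (1/2) (Real.sqrt 3 / 6) 1

lemma s3 : Real.sqrt 3 ^ 2 = 3 := Real.sq_sqrt (by norm_num)

lemma sd01 : dist sP0 sP1 = 1 := by
  rw [sP0, sP1, dist_spt]; norm_num
lemma sd12 : dist sP1 sP2 = 1 := by
  rw [sP1, sP2, dist_spt]
  rw [show (1 - 1/2:ℝ)^2 + (0 - Real.sqrt 3 / 2)^2 + (0-0:ℝ)^2 = 1 by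
    have := s3; ring_nf; nlinarith [s3]]
  exact Real.sqrt_one
lemma sd20 : dist sP2 sP0 = 1 := by
  rw [sP2, sP0, dist_spt]
  rw [show (1/2 - 0:ℝ)^2 + (Real.sqrt 3 / 2 - 0)^2 + (0-0:ℝ)^2 = 1 by nlinarith [s3]]
  exact Real.sqrt_one
lemma sd30 : dist sP3 sP0 = Real.sqrt (4/3) := by
  rw [sP3, sP0, dist_spt]
  congr 1; nlinarith [s3]
lemma sd31 : dist sP3 sP1 = Real.sqrt (4/3) := by
  rw [sP3, sP1, dist_spt]
  congr 1; nlinarith [s3]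
lemma sd32 : dist sP3 sP2 = Real.sqrt (4/3) := by
  rw [sP3, sP2, dist_spt]
  congr 1; nlinarith [s3]

lemma sP3_not_mem : sP3 ∉ affineSpan ℝ ({sP0, sP1, sP2} : Set (EuclideanSpace ℝ (Fin 3))) := by
  intro h
  have hle : affineSpan ℝ ({sP0, sP1, sP2} : Set (EuclideanSpace ℝ (Fin 3))) ≤
      AffineSubspace.comap ((EuclideanSpace.projₗ (𝕜 := ℝ) (2 : Fin 3)).toAffineMap)
        (affineSpan ℝ ({(0:ℝ)} : Set ℝ)) := by
    rw [affineSpan_le]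
    rintro x (rfl | rfl | rfl) <;>
      · simp only [AffineSubspace.coe_comap, Set.mem_preimage, SetLike.mem_coe]
        apply mem_affineSpan
        simp [sP0, sP1, sP2, LinearMap.toAffineMap, spt]
  have h2 := hle h
  rw [AffineSubspace.mem_comap, AffineSubspace.mem_affineSpan_singleton] at h2
  have h1 : (EuclideanSpace.projₗ (𝕜 := ℝ) (2 : Fin 3)).toAffineMap sP3 = 1 := rfl
  rw [h1] at h2
  norm_num at h2

lemma seps_lt : ∠ sP0 sP3 sP1 < π / 3 := by
  have l := EuclideanGeometry.law_cos sP0 sP3 sP1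
  have c30 : dist sP0 sP3 = Real.sqrt (4/3) := by rw [dist_comm]; exact sd30
  have c31 : dist sP1 sP3 = Real.sqrt (4/3) := by rw [dist_comm]; exact sd31
  have hsq : Real.sqrt (4/3) * Real.sqrt (4/3) = 4/3 := Real.mul_self_sqrt (by norm_num)
  rw [sd01, c30, c31] at l
  have hcos : Real.cos (∠ sP0 sP3 sP1) = 5/8 := by nlinarith [l, hsq]
  by_contra hcon
  push_neg at hcon
  rcases eq_or_lt_of_le hcon with h | h
  · rw [← h, Real.cos_pi_div_three] at hcos; norm_num at hcos
  · have hb : ∠ sP0 sP3 sP1 ∈ Set.Icc 0 π :=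
      ⟨EuclideanGeometry.angle_nonneg _ _ _, EuclideanGeometry.angle_le_pi _ _ _⟩
    have hpi3 : (π/3:ℝ) ∈ Set.Icc 0 π := ⟨by positivity, by linarith [Real.pi_pos]⟩
    have hlt := Real.strictAntiOn_cos hpi3 hb h
    rw [Real.cos_pi_div_three, hcos] at hlt
    norm_num at hlt

lemma snotcol : ¬ Collinear ℝ ({sP0, sP1, sP2} : Set (EuclideanSpace ℝ (Fin 3))) := by
  rw [EuclideanGeometry.collinear_iff_eq_or_eq_or_angle_eq_zero_or_angle_eq_pi]
  have l := EuclideanGeometry.law_cos sP0 sP1 sP2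
  have c01 : dist sP0 sP1 = 1 := sd01
  have c21 : dist sP2 sP1 = 1 := by rw [dist_comm]; exact sd12
  have c02 : dist sP0 sP2 = 1 := by rw [dist_comm]; exact sd20
  rw [c01, c21, c02] at l
  rintro (h | h | h | h)
  · rw [h] at c01; simp at c01
  · rw [h] at c21; simp at c21
  · rw [h, Real.cos_zero] at l; norm_num at l
  · rw [h, Real.cos_pi] at l; norm_num at l

lemma saffind : AffineIndependent ℝ ![sP0, sP1, sP2, sP3] := by
  have h3 : AffineIndependent ℝ ![sP0, sP1, sP2] :=
    affineIndependent_iff_not_collinear_set.2 snotcol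
  set p : Fin 4 → EuclideanSpace ℝ (Fin 3) := ![sP0, sP1, sP2, sP3] with hp
  let e : Fin 3 ≃ {y : Fin 4 // y ≠ 3} :=
    { toFun := fun j => ⟨j.castSucc, Fin.castSucc_lt_last j |>.ne⟩
      invFun := fun y => ⟨y.1.1, lt_of_le_of_ne (Nat.lt_succ_iff.1 y.1.2)
        (fun h => y.2 (Fin.ext h))⟩
      left_inv := fun j => by ext; simp [Fin.castSucc]
      right_inv := fun y => by ext; simp [Fin.castSucc] }
  apply AffineIndependent.affineIndependent_of_notMem_span (i := (3 : Fin 4))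
  · rw [← affineIndependent_equiv e]
    have : (fun x : {y : Fin 4 // y ≠ 3} => p x) ∘ e = ![sP0, sP1, sP2] := by
      funext j
      fin_cases j <;> simp [e, p, Fin.castSucc] <;> rfl
    rw [this]
    exact h3
  · have himg : p '' {x | x ≠ 3} = {sP0, sP1, sP2} := by
      ext x
      constructor
      · rintro ⟨i, hi, rfl⟩
        fin_cases i
        · left; rfl
        · right; left; rfl
        · right; right; rfl
        · exact absurd rfl hi
      · rintro (rfl | rfl | rfl)
        · exact ⟨0, by simp [p], rfl⟩
        · exact ⟨1, by simp [p], rfl⟩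
        · exact ⟨2, by simp [p], rfl⟩
    rw [himg]
    exact sP3_not_mem

/-- A tall "spike" tetrahedron over an equilateral base: the three apex face
angles are equal to `ε`, the angle deficit at the apex is `2π − 3ε`, the angle
deficit at each base vertex is `2π/3 + ε`; hence for `0 < ε < π/3` the apex is
the unique sharp vertex, and in particular there is a tetrahedron with exactly
one vertex of angle deficit at least `π`. -/
theorem spike_tetrahedron_one_sharp
    (v₁ v₂ v₃ v₄ : EuclideanSpace ℝ (Fin 3)) (s : ℝ) (hs : 0 < s)
    (h12 : dist v₁ v₂ = s) (h23 : dist v₂ v₃ = s) (h31 : dist v₃ v₁ = s)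
    (hv₄ : v₄ ∉ affineSpan ℝ ({v₁, v₂, v₃} : Set (EuclideanSpace ℝ (Fin 3))))
    (heq : dist v₄ v₁ = dist v₄ v₂ ∧ dist v₄ v₂ = dist v₄ v₃)
    (ε : ℝ) (hε : ε = ∠ v₁ v₄ v₂) :
    (∠ v₁ v₄ v₂ = ε ∧ ∠ v₂ v₄ v₃ = ε ∧ ∠ v₃ v₄ v₁ = ε) ∧
    (2 * π - (∠ v₁ v₄ v₂ + ∠ v₂ v₄ v₃ + ∠ v₃ v₄ v₁) = 2 * π - 3 * ε) ∧
    (2 * π - (∠ v₂ v₁ v₃ + ∠ v₂ v₁ v₄ + ∠ v₃ v₁ v₄) = 2 * π / 3 + ε) ∧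
    (2 * π - (∠ v₁ v₂ v₃ + ∠ v₁ v₂ v₄ + ∠ v₃ v₂ v₄) = 2 * π / 3 + ε) ∧
    (2 * π - (∠ v₁ v₃ v₂ + ∠ v₁ v₃ v₄ + ∠ v₂ v₃ v₄) = 2 * π / 3 + ε) ∧
    (0 < ε → ε < π / 3 →
      (2 * π - (∠ v₁ v₄ v₂ + ∠ v₂ v₄ v₃ + ∠ v₃ v₄ v₁) ≥ π ∧
       2 * π - (∠ v₂ v₁ v₃ + ∠ v₂ v₁ v₄ + ∠ v₃ v₁ v₄) < π ∧
       2 * π - (∠ v₁ v₂ v₃ + ∠ v₁ v₂ v₄ + ∠ v₃ v₂ v₄) < π ∧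
       2 * π - (∠ v₁ v₃ v₂ + ∠ v₁ v₃ v₄ + ∠ v₂ v₃ v₄) < π)) ∧
    (∃ p : Fin 4 → EuclideanSpace ℝ (Fin 3), AffineIndependent ℝ p ∧
      ∃! i : Fin 4,
        2 * π - ∑ jk ∈ Finset.univ.filter
            (fun jk : Fin 4 × Fin 4 => jk.1 < jk.2 ∧ jk.1 ≠ i ∧ jk.2 ≠ i),
          ∠ (p jk.1) (p i) (p jk.2) ≥ π) := by
  subst hε
  obtain ⟨E1, E2, D1, D2, D3⟩ := spike_aux v₁ v₂ v₃ v₄ s hs h12 h23 h31 hv₄ heq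
  refine ⟨⟨rfl, E1, E2⟩, by rw [E1, E2]; ring, by rw [D1]; ring, by rw [D2]; ring,
    by rw [D3]; ring, fun h1 h2 => ⟨by rw [E1, E2]; linarith, by rw [D1]; linarith,
    by rw [D2]; linarith, by rw [D3]; linarith⟩, ?_⟩
  -- the concrete spike tetrahedron
  obtain ⟨F1, F2, G1, G2, G3⟩ := spike_aux sP0 sP1 sP2 sP3 1 one_pos sd01 sd12 sd20
    sP3_not_mem ⟨by rw [sd30, sd31], by rw [sd31, sd32]⟩
  have hlt := seps_lt
  have hpos := Real.pi_pos
  refine ⟨![sP0, sP1, sP2, sP3], saffind, 3, ?_, ?_⟩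
  · have key : 2 * π - ∑ jk ∈ Finset.univ.filter
        (fun jk : Fin 4 × Fin 4 => jk.1 < jk.2 ∧ jk.1 ≠ 3 ∧ jk.2 ≠ 3),
        ∠ (![sP0, sP1, sP2, sP3] jk.1) (![sP0, sP1, sP2, sP3] 3)
          (![sP0, sP1, sP2, sP3] jk.2) ≥ π := by
      rw [show (Finset.univ.filter
          (fun jk : Fin 4 × Fin 4 => jk.1 < jk.2 ∧ jk.1 ≠ 3 ∧ jk.2 ≠ 3)) =
          {((0 : Fin 4), (1 : Fin 4)), (0, 2), (1, 2)} from by decide,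
        Finset.sum_insert (by decide), Finset.sum_insert (by decide), Finset.sum_singleton]
      show 2 * π - (∠ sP0 sP3 sP1 + (∠ sP0 sP3 sP2 + ∠ sP1 sP3 sP2)) ≥ π
      have hc := EuclideanGeometry.angle_comm sP0 sP3 sP2
      linarith [F1, F2, hlt, hpos, hc]
    exact key
  · intro y hy
    fin_cases y
    · exfalso
      have hy1 : 2 * π - ∑ jk ∈ Finset.univ.filter
          (fun jk : Fin 4 × Fin 4 => jk.1 < jk.2 ∧ jk.1 ≠ 0 ∧ jk.2 ≠ 0),
          ∠ (![sP0, sP1, sP2, sP3] jk.1) (![sP0, sP1, sP2, sP3] 0)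
            (![sP0, sP1, sP2, sP3] jk.2) ≥ π := hy
      rw [show (Finset.univ.filter
          (fun jk : Fin 4 × Fin 4 => jk.1 < jk.2 ∧ jk.1 ≠ 0 ∧ jk.2 ≠ 0)) =
          {((1 : Fin 4), (2 : Fin 4)), (1, 3), (2, 3)} from by decide,
        Finset.sum_insert (by decide), Finset.sum_insert (by decide),
        Finset.sum_singleton] at hy1
      have hy2 : 2 * π - (∠ sP1 sP0 sP2 + (∠ sP1 sP0 sP3 + ∠ sP2 sP0 sP3)) ≥ π := hy1
      linarith [G1, hlt, hpos, hy2]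
    · exfalso
      have hy1 : 2 * π - ∑ jk ∈ Finset.univ.filter
          (fun jk : Fin 4 × Fin 4 => jk.1 < jk.2 ∧ jk.1 ≠ 1 ∧ jk.2 ≠ 1),
          ∠ (![sP0, sP1, sP2, sP3] jk.1) (![sP0, sP1, sP2, sP3] 1)
            (![sP0, sP1, sP2, sP3] jk.2) ≥ π := hy
      rw [show (Finset.univ.filter
          (fun jk : Fin 4 × Fin 4 => jk.1 < jk.2 ∧ jk.1 ≠ 1 ∧ jk.2 ≠ 1)) =
          {((0 : Fin 4), (2 : Fin 4)), (0, 3), (2, 3)} from by decide,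
        Finset.sum_insert (by decide), Finset.sum_insert (by decide),
        Finset.sum_singleton] at hy1
      have hy2 : 2 * π - (∠ sP0 sP1 sP2 + (∠ sP0 sP1 sP3 + ∠ sP2 sP1 sP3)) ≥ π := hy1
      linarith [G2, hlt, hpos, hy2]
    · exfalso
      have hy1 : 2 * π - ∑ jk ∈ Finset.univ.filter
          (fun jk : Fin 4 × Fin 4 => jk.1 < jk.2 ∧ jk.1 ≠ 2 ∧ jk.2 ≠ 2),
          ∠ (![sP0, sP1, sP2, sP3] jk.1) (![sP0, sP1, sP2, sP3] 2)
            (![sP0, sP1, sP2, sP3] jk.2) ≥ π := hy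
      rw [show (Finset.univ.filter
          (fun jk : Fin 4 × Fin 4 => jk.1 < jk.2 ∧ jk.1 ≠ 2 ∧ jk.2 ≠ 2)) =
          {((0 : Fin 4), (1 : Fin 4)), (0, 3), (1, 3)} from by decide,
        Finset.sum_insert (by decide), Finset.sum_insert (by decide),
        Finset.sum_singleton] at hy1
      have hy2 : 2 * π - (∠ sP0 sP2 sP1 + (∠ sP0 sP2 sP3 + ∠ sP1 sP2 sP3)) ≥ π := hy1
      linarith [G3, hlt, hpos, hy2]
    · rfl
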